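/- Let p : ℝ → ℝ be C¹ and 1-periodic with ∫₀¹ p = 0, and define q̃(x) = p'(x) + p(x)² − ∫₀¹ p². Then ∫₀¹ p² ≤ ‖q̃‖_{L^∞[0,1]}. -/

import Mathlib

open intervalIntegral Real

theorem riccati_functional_bounded (p : ℝ → ℝ) (hp : ContDiff ℝ 1 p)
    (hper : ∀ x, p (x + 1) = p x) (hmean : ∫ x in (0:ℝ)..1, p x = 0)
    (q : ℝ → ℝ)
    (hq : ∀ x, q x = deriv p x + (p x) ^ 2 - ∫ t in (0:ℝ)..1, (p t) ^ 2) :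
    (∫ x in (0:ℝ)..1, (p x) ^ 2) ≤ sSup ((fun x => |q x|) '' Set.Icc (0:ℝ) 1) := by
  set C : ℝ := ∫ t in (0:ℝ)..1, (p t) ^ 2 with hC
  have hpc : Continuous p := hp.continuous
  have hdc : Continuous (deriv p) := hp.continuous_deriv le_rfl
  have hpd : Differentiable ℝ p := hp.differentiable one_ne_zero
  set F : ℝ → ℝ := fun x => ∫ t in (0:ℝ)..x, p t with hF
  have hFd : ∀ x, HasDerivAt F (p x) x := by
    intro x
    exact intervalIntegral.integral_hasDerivAt_right (hpc.intervalIntegrable 0 x)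
      (hpc.stronglyMeasurableAtFilter _ _) hpc.continuousAt
  have hFc : Continuous F := continuous_iff_continuousAt.mpr fun x => (hFd x).continuousAt
  set v : ℝ → ℝ := fun x => p x * Real.exp (F x) with hv
  set g : ℝ → ℝ := fun x => (deriv p x + (p x) ^ 2) * Real.exp (F x) with hg
  have hvd : ∀ x, HasDerivAt v (g x) x := by
    intro x
    have h1 : HasDerivAt p (deriv p x) x := (hpd x).hasDerivAt
    have h2 : HasDerivAt (fun y => Real.exp (F y)) (Real.exp (F x) * p x) x :=
      (Real.hasDerivAt_exp (F x)).comp x (hFd x)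
    have : HasDerivAt (fun y => p y * Real.exp (F y)) _ x := h1.mul h2
    convert this using 1
    ring
  have hgc : Continuous g := ((hdc.add (hpc.pow 2)).mul (hFc.rexp))
  have hF1 : F 1 = 0 := hmean
  have hF0 : F 0 = 0 := by simp [hF]
  have hp01 : p 1 = p 0 := by simpa using hper 0
  have hv10 : v 1 = v 0 := by simp [hv, hF1, hF0, hp01]
  have hintg : ∫ x in (0:ℝ)..1, g x = 0 := by
    rw [intervalIntegral.integral_eq_sub_of_hasDerivAt
      (fun x _ => hvd x) (hgc.intervalIntegrable 0 1), hv10, sub_self]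
  -- find a point where g ≤ 0
  have hex : ∃ x ∈ Set.Icc (0:ℝ) 1, g x ≤ 0 := by
    by_contra h
    push_neg at h
    have hpos : 0 < ∫ x in (0:ℝ)..1, g x := by
      apply intervalIntegral.intervalIntegral_pos_of_pos_on
        (hgc.intervalIntegrable 0 1) _ one_pos
      intro x hx
      exact h x ⟨le_of_lt hx.1, le_of_lt hx.2⟩
    linarith [hintg ▸ hpos]
  obtain ⟨x, hx, hgx⟩ := hex
  have hexp : 0 < Real.exp (F x) := Real.exp_pos _
  have hnp : deriv p x + (p x) ^ 2 ≤ 0 := by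
    by_contra h
    push_neg at h
    have : 0 < g x := mul_pos h hexp
    linarith
  have hCpos : 0 ≤ C := by
    rw [hC]
    apply intervalIntegral.integral_nonneg (by norm_num)
    intro t _
    positivity
  have hqx : q x ≤ -C := by
    rw [hq x]
    linarith
  have habs : C ≤ |q x| := le_trans (by linarith) (neg_le_abs (q x))
  have hqc : Continuous q := by
    have h : q = fun x => deriv p x + (p x) ^ 2 - C := funext hq
    rw [h]
    exact (hdc.add (hpc.pow 2)).sub continuous_const
  exact le_trans habs
    (le_csSup (isCompact_Icc.image (continuous_abs.comp hqc)).bddAbove ⟨x, hx, rfl⟩)
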